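/- Let X be a finite set with n ≥ 1 elements and let Σ be a nonempty finite set of enumerations of X (sequences in which each element of X occurs exactly once). Then the family 𝓛_Σ of all unions of prefixes of members of Σ is a learning space on X: it contains the empty set and X, it is closed under unions, and it is accessible (every nonempty member S of 𝓛_Σ contains an element x with S \ {x} ∈ 𝓛_Σ). -/

import Mathlib

section Aux
variable {α : Type*} [DecidableEq α]

lemma aux_indexOf_lt_of_mem_take {l : List α} {y : α} {k : ℕ} (h : y ∈ l.take k) :
    l.idxOf y < k := by
  induction l generalizing k with
  | nil => simp at h
  | cons a t ih =>
    cases k with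
    | zero => simp at h
    | succ k =>
      simp only [List.take_succ_cons, List.mem_cons] at h
      by_cases hya : a = y
      · simp [List.idxOf_cons_eq _ hya]
      · rcases h with h | h
        · exact absurd h.symm hya
        · rw [List.idxOf_cons_ne _ hya]
          exact Nat.succ_lt_succ (ih h)

lemma aux_mem_take_of_indexOf_lt {l : List α} {y : α} {k : ℕ} (hy : y ∈ l)
    (h : l.idxOf y < k) : y ∈ l.take k := by
  induction l generalizing k with
  | nil => simp at hy
  | cons a t ih =>
    cases k with
    | zero => omega
    | succ k =>
      by_cases hya : a = y
      · simp [hya]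
      · rw [List.idxOf_cons_ne _ hya] at h
        rcases List.mem_cons.1 hy with h' | h'
        · exact absurd h'.symm hya
        · exact List.mem_cons_of_mem _ (ih h' (Nat.lt_of_succ_lt_succ h))

lemma aux_take_subset_take {l : List α} {a b : ℕ} (h : a ≤ b) {x : α}
    (hx : x ∈ l.take a) : x ∈ l.take b :=
  aux_mem_take_of_indexOf_lt (List.take_subset _ _ hx)
    (lt_of_lt_of_le (aux_indexOf_lt_of_mem_take hx) h)

end Aux


/-- A learning space on a finite set `X`: a family of subsets of `X` containing the
empty set, whose union is `X`, that is accessible and closed under unions. -/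
def IsLearningSpace {α : Type*} [DecidableEq α] (X : Finset α) (L : Set (Finset α)) : Prop :=
  ∅ ∈ L ∧
  (∀ S ∈ L, S ⊆ X) ∧
  (∀ x ∈ X, ∃ S ∈ L, x ∈ S) ∧
  (∀ S ∈ L, S.Nonempty → ∃ x ∈ S, S.erase x ∈ L) ∧
  (∀ S ∈ L, ∀ T ∈ L, S ∪ T ∈ L)

/-- The family of all unions of prefixes of members of `Σ` (one prefix length chosen for
each sequence; the empty union `∅` is included). -/
def LSigma {α : Type*} [DecidableEq α] (Sig : Finset (List α)) : Set (Finset α) :=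
  { S | ∃ f : List α → ℕ, S = Sig.sup fun σ => (σ.take (f σ)).toFinset }

/-- If `X` is a finite set with at least one element and `Σ` is a nonempty finite set of
enumerations of `X`, then the family of all unions of prefixes of members of `Σ` is a
learning space on `X`; in particular it contains `∅` and `X`. -/
theorem stmt0 {α : Type*} [DecidableEq α] (X : Finset α) (hn : 1 ≤ X.card)
    (Sig : Finset (List α)) (hne : Sig.Nonempty)
    (henum : ∀ σ ∈ Sig, σ.Nodup ∧ σ.toFinset = X) :
    IsLearningSpace X (LSigma Sig) ∧ (∅ : Finset α) ∈ LSigma Sig ∧ X ∈ LSigma Sig := by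
  -- empty set
  have hempty : (∅ : Finset α) ∈ LSigma Sig := by
    refine ⟨fun _ => 0, ?_⟩
    refine le_antisymm (Finset.empty_subset _) (Finset.sup_le fun σ _ => le_of_eq ?_)
    simp
  -- every member is a subset of X
  have hsub : ∀ S ∈ LSigma Sig, S ⊆ X := by
    rintro S ⟨f, rfl⟩
    intro y hy
    rw [Finset.mem_sup] at hy
    obtain ⟨σ, hσ, hy⟩ := hy
    rw [List.mem_toFinset] at hy
    rw [← (henum σ hσ).2, List.mem_toFinset]
    exact List.take_subset _ _ hy
  -- X is a member
  have hX : X ∈ LSigma Sig := by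
    refine ⟨fun σ => σ.length, ?_⟩
    refine le_antisymm ?_ (Finset.sup_le fun σ hσ => by simp [(henum σ hσ).2])
    obtain ⟨σ₀, hσ₀⟩ := hne
    calc X = (σ₀.take σ₀.length).toFinset := by simp [(henum σ₀ hσ₀).2]
      _ ≤ _ := Finset.le_sup (f := fun σ => (σ.take σ.length).toFinset) hσ₀
  -- union closure
  have hunion : ∀ S ∈ LSigma Sig, ∀ T ∈ LSigma Sig, S ∪ T ∈ LSigma Sig := by
    rintro S ⟨f, rfl⟩ T ⟨g, rfl⟩
    refine ⟨fun σ => max (f σ) (g σ), ?_⟩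
    ext y
    simp only [Finset.mem_union, Finset.mem_sup, List.mem_toFinset]
    constructor
    · rintro (⟨σ, hσ, hy⟩ | ⟨σ, hσ, hy⟩)
      · exact ⟨σ, hσ, aux_take_subset_take (le_max_left _ _) hy⟩
      · exact ⟨σ, hσ, aux_take_subset_take (le_max_right _ _) hy⟩
    · rintro ⟨σ, hσ, hy⟩
      rcases max_cases (f σ) (g σ) with ⟨h1, _⟩ | ⟨h1, _⟩
      · exact Or.inl ⟨σ, hσ, by rwa [h1] at hy⟩
      · exact Or.inr ⟨σ, hσ, by rwa [h1] at hy⟩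
  -- accessibility
  have hacc : ∀ S ∈ LSigma Sig, S.Nonempty → ∃ x ∈ S, S.erase x ∈ LSigma Sig := by
    rintro S hSL hSne
    obtain ⟨f, hSf⟩ := hSL
    have hmemS : ∀ y, y ∈ S ↔ ∃ τ ∈ Sig, y ∈ τ.take (f τ) := by
      intro y
      rw [hSf]
      simp [Finset.mem_sup]
    -- every element of S is in every τ ∈ Sig
    have hmemτ : ∀ y ∈ S, ∀ τ ∈ Sig, y ∈ τ := by
      intro y hy τ hτ
      have := hsub S ⟨f, hSf⟩ hy
      rw [← (henum τ hτ).2, List.mem_toFinset] at this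
      exact this
    set m : α → ℕ := fun y => sInf {k | ∃ τ ∈ Sig, y ∈ τ.take (f τ) ∧ τ.idxOf y = k} with hm
    have hmne : ∀ y ∈ S, {k | ∃ τ ∈ Sig, y ∈ τ.take (f τ) ∧ τ.idxOf y = k}.Nonempty := by
      intro y hy
      obtain ⟨τ, hτ, hyt⟩ := (hmemS y).1 hy
      exact ⟨τ.idxOf y, τ, hτ, hyt, rfl⟩
    obtain ⟨x, hxS, hxmax⟩ := Finset.exists_max_image S m hSne
    refine ⟨x, hxS, fun τ => min (f τ) (τ.idxOf x), ?_⟩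
    ext y
    simp only [Finset.mem_erase, Finset.mem_sup, List.mem_toFinset]
    constructor
    · rintro ⟨hyx, hyS⟩
      obtain ⟨τ, hτ, hyt, hidx⟩ := Nat.sInf_mem (hmne y hyS)
      have hky : τ.idxOf y = m y := hidx
      have hyf : τ.idxOf y < f τ := aux_indexOf_lt_of_mem_take hyt
      have hyτ : y ∈ τ := List.take_subset _ _ hyt
      have hxτ : x ∈ τ := hmemτ x hxS τ hτ
      have hlt : τ.idxOf y < τ.idxOf x := by
        by_contra hc
        push_neg at hc
        have hxin : x ∈ τ.take (f τ) :=
          aux_mem_take_of_indexOf_lt hxτ (lt_of_le_of_lt hc hyf)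
        have h1 : m x ≤ τ.idxOf x := Nat.sInf_le ⟨τ, hτ, hxin, rfl⟩
        have h2 : m y ≤ m x := hxmax y hyS
        have : τ.idxOf x = τ.idxOf y := by omega
        exact hyx ((List.idxOf_inj hyτ).1 this.symm)
      exact ⟨τ, hτ, aux_mem_take_of_indexOf_lt hyτ (lt_min hyf hlt)⟩
    · rintro ⟨τ, hτ, hy⟩
      have h1 : y ∈ τ.take (f τ) := aux_take_subset_take (min_le_left _ _) hy
      have h2 : τ.idxOf y < τ.idxOf x :=
        lt_of_lt_of_le (aux_indexOf_lt_of_mem_take hy) (min_le_right _ _)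
      refine ⟨?_, (hmemS y).2 ⟨τ, hτ, h1⟩⟩
      rintro rfl
      exact lt_irrefl _ h2
  exact ⟨⟨hempty, hsub, fun x hx => ⟨X, hX, hx⟩, hacc, hunion⟩, hempty, hX⟩
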